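/- Let X be a Hausdorff topological space with a continuous involution τ : X → X whose fixed point set X^τ = {x₁, …, xₙ} is finite. Suppose that for each i = 1, …, n there is a topological embedding hᵢ : D → X of the closed unit disk D = {z ∈ ℂ : |z| ≤ 1} such that: the images Dᵢ := hᵢ(D) are pairwise disjoint; hᵢ(0) = xᵢ; hᵢ is equivariant, i.e. hᵢ(−z) = τ(hᵢ(z)) for all z ∈ D; and the topological frontier of Dᵢ in X is contained in hᵢ(∂D), the image of the unit circle. Then for every function ε : X^τ → {+1, −1} there exists a continuous map ξ_ε : X → SU(2) satisfying ξ_ε(τ(x)) = ξ_ε(x)⁻¹ for all x ∈ X and ξ_ε(xᵢ) = ε(xᵢ)·1 for every i = 1, …, n (where 1 is the 2×2 identity matrix). -/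

import Mathlib

noncomputable section

noncomputable section

namespace EquivSU2Aux

open Complex Matrix

/-- radial cosine part -/
def cc (z : ℂ) : ℝ := -Real.cos (Real.pi * ‖z‖)

/-- radial sine part times unit vector -/
def ff (z : ℂ) : ℂ := ((Real.sin (Real.pi * ‖z‖) / ‖z‖ : ℝ) : ℂ) * z

lemma ff_zero : ff 0 = 0 := by simp [ff]

lemma cc_neg (z : ℂ) : cc (-z) = cc z := by simp [cc]

lemma ff_neg (z : ℂ) : ff (-z) = - ff z := by simp [ff]

lemma key_real (z : ℂ) : (cc z)^2 + Complex.normSq (ff z) = 1 := by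
  rcases eq_or_ne z 0 with rfl | hz
  · simp [cc, ff]
  · have hz' : ‖z‖ ≠ 0 := by simpa using hz
    have h2 : Complex.normSq (ff z) = (Real.sin (Real.pi * ‖z‖))^2 := by
      have h3 : Complex.normSq (ff z)
          = (Real.sin (Real.pi * ‖z‖) / ‖z‖)^2 * ‖z‖^2 := by
        rw [ff, Complex.normSq_mul, Complex.normSq_ofReal, Complex.normSq_eq_norm_sq]
        ring
      rw [h3, div_pow, div_mul_cancel₀ _ (pow_ne_zero 2 hz')]
    rw [h2, cc, neg_sq, add_comm]
    exact Real.sin_sq_add_cos_sq _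

lemma key (z : ℂ) : ((cc z : ℝ) : ℂ)^2 + (starRingEnd ℂ) (ff z) * (ff z) = 1 := by
  rw [mul_comm, Complex.mul_conj]
  exact_mod_cast key_real z

def M (z : ℂ) : Matrix (Fin 2) (Fin 2) ℂ :=
  !![((cc z : ℝ) : ℂ), Complex.I * (starRingEnd ℂ) (ff z);
     Complex.I * ff z, ((cc z : ℝ) : ℂ)]

lemma M_mul (z : ℂ) : M (-z) * M z = 1 := by
  rw [M, M, cc_neg, ff_neg, Matrix.mul_fin_two, Matrix.one_fin_two]
  ext i j
  fin_cases i <;> fin_cases j <;> simp <;>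
    first
      | linear_combination key z - ((starRingEnd ℂ) (ff z) * ff z) * Complex.I_sq
      | linear_combination key z + ((starRingEnd ℂ) (ff z) * ff z) * Complex.I_sq
      | ring

lemma star_M (z : ℂ) : star (M z) = M (-z) := by
  rw [M, M, cc_neg, ff_neg]
  ext i j
  fin_cases i <;> fin_cases j <;>
    simp [Matrix.conjTranspose_apply] <;> ring

lemma M_inv (z : ℂ) : (M z)⁻¹ = M (-z) :=
  Matrix.inv_eq_left_inv (M_mul z)

lemma M_mem (z : ℂ) : M z ∈ Matrix.specialUnitaryGroup (Fin 2) ℂ := by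
  rw [Matrix.mem_specialUnitaryGroup_iff]
  constructor
  · rw [Matrix.mem_unitaryGroup_iff, star_M]
    have := M_mul (-z)
    rwa [neg_neg] at this
  · rw [M, Matrix.det_fin_two_of]
    first
      | linear_combination key z - ((starRingEnd ℂ) (ff z) * ff z) * Complex.I_sq
      | linear_combination key z + ((starRingEnd ℂ) (ff z) * ff z) * Complex.I_sq

lemma M_boundary {z : ℂ} (hz : ‖z‖ = 1) : M z = 1 := by
  have hc : cc z = 1 := by rw [cc, hz, mul_one, Real.cos_pi]; norm_num
  have hf : ff z = 0 := by rw [ff, hz, mul_one, Real.sin_pi]; simp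
  rw [M, hc, hf, Matrix.one_fin_two]
  simp

lemma M_zero : M 0 = (-1 : ℂ) • (1 : Matrix (Fin 2) (Fin 2) ℂ) := by
  have hc : cc 0 = -1 := by simp [cc]
  rw [M, hc, ff_zero]
  ext i j
  fin_cases i <;> fin_cases j <;> simp [Matrix.smul_apply]

lemma cont_cc : Continuous cc := by
  unfold cc; fun_prop

lemma cont_ff : Continuous ff := by
  rw [continuous_iff_continuousAt]
  intro z
  rcases eq_or_ne z 0 with rfl | hz
  · have hb : ∀ w : ℂ, ‖ff w‖ ≤ Real.pi * ‖w‖ := by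
      intro w
      rcases eq_or_ne w 0 with rfl | hw
      · simp [ff_zero, Real.pi_pos.le]
      · have hw' : ‖w‖ ≠ 0 := by simpa using hw
        have : ‖ff w‖ = |Real.sin (Real.pi * ‖w‖)| := by
          rw [ff, norm_mul, Complex.norm_real, Real.norm_eq_abs, abs_div, abs_norm,
            div_mul_cancel₀ _ hw']
        rw [this]
        calc |Real.sin (Real.pi * ‖w‖)| ≤ |Real.pi * ‖w‖| := Real.abs_sin_le_abs
          _ = Real.pi * ‖w‖ := by
              rw [abs_mul, abs_of_pos Real.pi_pos, abs_norm]
    have ht : Filter.Tendsto (fun w : ℂ => Real.pi * ‖w‖) (nhds 0) (nhds 0) := by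
      have : Filter.Tendsto (fun w : ℂ => ‖w‖) (nhds 0) (nhds 0) := by
        simpa using (continuous_norm (E := ℂ)).tendsto 0
      simpa using this.const_mul Real.pi
    have := squeeze_zero_norm hb ht
    unfold ContinuousAt
    rwa [ff_zero]
  · have hz' : ‖z‖ ≠ 0 := by simpa using hz
    apply ContinuousAt.mul
    · apply Complex.continuous_ofReal.continuousAt.comp
      exact ((Real.continuous_sin.comp
        (continuous_const.mul continuous_norm)).continuousAt).div
        continuous_norm.continuousAt hz'
    · exact continuousAt_id

lemma cont_M : Continuous M := by
  apply continuous_matrix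
  intro i j
  have hcc : Continuous fun z => ((cc z : ℝ) : ℂ) :=
    Complex.continuous_ofReal.comp cont_cc
  have hcf : Continuous fun z => (starRingEnd ℂ) (ff z) :=
    Complex.continuous_conj.comp cont_ff
  fin_cases i <;> fin_cases j <;> simp [M]
  · exact hcc
  · exact continuous_const.mul hcf
  · exact continuous_const.mul cont_ff
  · exact hcc

lemma one_inv : (1 : Matrix (Fin 2) (Fin 2) ℂ)⁻¹ = 1 :=
  Matrix.inv_eq_left_inv (by simp)

end EquivSU2Aux

end

/-- Surjectivity part of Lemma 2.14. -/
theorem exists_equivariant_SU2_map_with_prescribed_signs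
    (X : Type*) [TopologicalSpace X] [T2Space X]
    (τ : X → X) (hτc : Continuous τ) (hτ : Function.Involutive τ)
    (n : ℕ) (xs : Fin n → X) (hinj : Function.Injective xs)
    (hfix : {x : X | τ x = x} = Set.range xs)
    (h : Fin n → {z : ℂ // ‖z‖ ≤ 1} → X)
    (hemb : ∀ i, Topology.IsEmbedding (h i))
    (hdisj : ∀ i j, i ≠ j → Disjoint (Set.range (h i)) (Set.range (h j)))
    (hcenter : ∀ i, h i ⟨0, by norm_num⟩ = xs i)
    (hequiv : ∀ i (z : {z : ℂ // ‖z‖ ≤ 1}),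
      h i ⟨-(z : ℂ), by simpa using z.2⟩ = τ (h i z))
    (hfront : ∀ i, frontier (Set.range (h i)) ⊆
      h i '' {z : {z : ℂ // ‖z‖ ≤ 1} | ‖(z : ℂ)‖ = 1}) :
    ∀ ε : Fin n → ℂ, (∀ i, ε i = 1 ∨ ε i = -1) →
      ∃ ξ : X → Matrix (Fin 2) (Fin 2) ℂ,
        Continuous ξ ∧
        (∀ x, ξ x ∈ Matrix.specialUnitaryGroup (Fin 2) ℂ) ∧
        (∀ x, ξ (τ x) = (ξ x)⁻¹) ∧
        (∀ i, ξ (xs i) = ε i • (1 : Matrix (Fin 2) (Fin 2) ℂ)) := by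
  intro ε hε
  classical
  haveI : Nonempty {z : ℂ // ‖z‖ ≤ 1} := ⟨⟨0, by norm_num⟩⟩
  haveI : CompactSpace {z : ℂ // ‖z‖ ≤ 1} := by
    have hcpt : IsCompact {z : ℂ | ‖z‖ ≤ 1} := by
      have hset : {z : ℂ | ‖z‖ ≤ 1} = Metric.closedBall 0 1 := by
        ext z; simp [Metric.mem_closedBall, dist_zero_right]
      rw [hset]
      exact isCompact_closedBall 0 1
    exact isCompact_iff_compactSpace.mp hcpt
  set K : Fin n → Set X := fun i => Set.range (h i) with hK
  have hKcpt : ∀ i, IsCompact (K i) := fun i =>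
    isCompact_range (hemb i).continuous
  have hKcl : ∀ i, IsClosed (K i) := fun i => (hKcpt i).isClosed
  set g : Fin n → X → {z : ℂ // ‖z‖ ≤ 1} := fun i => Function.invFun (h i) with hgdef
  have hg : ∀ i x, x ∈ K i → h i (g i x) = x := fun i x hx =>
    Function.invFun_eq hx
  have hKτ : ∀ i x, x ∈ K i → τ x ∈ K i := by
    rintro i x ⟨z, rfl⟩
    exact ⟨⟨-(z : ℂ), by simpa using z.2⟩, hequiv i z⟩
  have hgτ : ∀ i x, x ∈ K i →
      ((g i (τ x) : ℂ)) = -((g i x : ℂ)) := by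
    intro i x hx
    have h1 : h i (g i (τ x)) = τ x := hg i (τ x) (hKτ i x hx)
    have h2 : h i ⟨-((g i x : ℂ)), by simpa using (g i x).2⟩ = τ x := by
      rw [hequiv i (g i x), hg i x hx]
    have := (hemb i).injective (h1.trans h2.symm)
    exact congrArg Subtype.val this
  -- the global map
  set ξ : X → Matrix (Fin 2) (Fin 2) ℂ := fun x =>
    if hx : ∃ i, x ∈ K i then
      (if ε hx.choose = 1 then 1 else EquivSU2Aux.M ((g hx.choose x : ℂ)))
    else 1 with hξdef
  have hchoice : ∀ (i : Fin n) (x : X), x ∈ K i → ∀ (hex : ∃ j, x ∈ K j),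
      hex.choose = i := by
    intro i x hx hex
    by_contra hne
    exact Set.disjoint_left.mp (hdisj _ _ hne) hex.choose_spec hx
  have hξ_on : ∀ (i : Fin n) (x : X), x ∈ K i →
      ξ x = if ε i = 1 then 1 else EquivSU2Aux.M ((g i x : ℂ)) := by
    intro i x hx
    have hex : ∃ j, x ∈ K j := ⟨i, hx⟩
    rw [hξdef]
    simp only [dif_pos hex, hchoice i x hx hex]
  have hξ_out : ∀ x : X, (¬ ∃ i, x ∈ K i) → ξ x = 1 := by
    intro x hx; rw [hξdef]; exact dif_neg hx
  refine ⟨ξ, ?_, ?_, ?_, ?_⟩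
  · -- continuity
    set s : Option (Fin n) → Set X :=
      fun o => o.elim (closure ((⋃ i, K i)ᶜ)) K with hs
    have hscl : ∀ o, IsClosed (s o) := by
      rintro (_ | i)
      · exact isClosed_closure
      · exact hKcl i
    have hscov : ⋃ o, s o = Set.univ := by
      apply Set.eq_univ_of_forall
      intro x
      by_cases hx : x ∈ ⋃ i, K i
      · obtain ⟨i, hi⟩ := Set.mem_iUnion.mp hx
        exact Set.mem_iUnion.mpr ⟨some i, hi⟩
      · exact Set.mem_iUnion.mpr ⟨none, subset_closure hx⟩
    refine (locallyFinite_of_finite s).continuous hscov hscl ?_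
    rintro (_ | i)
    · -- ξ = 1 on closure of the complement
      refine (continuousOn_const (c := (1 : Matrix (Fin 2) (Fin 2) ℂ))).congr ?_
      intro x hx
      by_cases hx2 : ∃ i, x ∈ K i
      · obtain ⟨i, hxi⟩ := hx2
        have hxint : x ∉ interior (K i) := by
          intro hin
          have hmem : x ∈ interior (⋃ j, K j) :=
            interior_mono (Set.subset_iUnion K i) hin
          rw [hs] at hx
          simp only [Option.elim] at hx
          rw [closure_compl] at hx
          exact hx hmem
        have hxfr : x ∈ frontier (K i) := by
          rw [(hKcl i).frontier_eq]
          exact ⟨hxi, hxint⟩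
        obtain ⟨z, hz1, hz2⟩ := hfront i hxfr
        have hgz : g i x = z :=
          (hemb i).injective (by rw [hg i x ⟨z, hz2⟩, hz2])
        rw [hξ_on i x ⟨z, hz2⟩]
        split
        · rfl
        · rw [hgz]; exact EquivSU2Aux.M_boundary hz1
      · exact hξ_out x hx2
    · -- continuity on each disk
      refine ContinuousOn.congr ?_ (fun x hx => hξ_on i x hx)
      by_cases hε1 : ε i = 1
      · simp only [if_pos hε1]; exact continuousOn_const
      · simp only [if_neg hε1]
        have hcK : ContinuousOn (fun x => EquivSU2Aux.M ((g i x : ℂ))) (K i) := by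
          rw [continuousOn_iff_continuous_restrict]
          set e := Topology.IsEmbedding.toHomeomorph (hemb i) with he
          have heq : ∀ p : (K i), g i (p : X) = e.symm p := by
            intro p
            apply (hemb i).injective
            rw [hg i _ p.2]
            have h3 : e (e.symm p) = p := e.apply_symm_apply p
            have h4 : ((e (e.symm p) : Set.range (h i)) : X) = h i (e.symm p) := rfl
            rw [← h4, h3]
          have : (K i).domRestrict (fun x => EquivSU2Aux.M ((g i x : ℂ)))
              = fun p => EquivSU2Aux.M (((e.symm p : {z : ℂ // ‖z‖ ≤ 1}) : ℂ)) := by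
            funext p
            simp only [Set.domRestrict_apply, heq p]
          rw [this]
          exact EquivSU2Aux.cont_M.comp
            (continuous_subtype_val.comp e.symm.continuous)
        exact hcK
  · -- membership in SU(2)
    intro x
    by_cases hx : ∃ i, x ∈ K i
    · obtain ⟨i, hxi⟩ := hx
      rw [hξ_on i x hxi]
      split
      · exact one_mem _
      · exact EquivSU2Aux.M_mem _
    · rw [hξ_out x hx]; exact one_mem _
  · -- equivariance
    intro x
    by_cases hx : ∃ i, x ∈ K i
    · obtain ⟨i, hxi⟩ := hx
      have hτx : τ x ∈ K i := hKτ i x hxi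
      rw [hξ_on i _ hτx, hξ_on i x hxi]
      by_cases hε1 : ε i = 1
      · rw [if_pos hε1, if_pos hε1, EquivSU2Aux.one_inv]
      · rw [if_neg hε1, if_neg hε1, hgτ i x hxi, EquivSU2Aux.M_inv]
    · have hτx : ¬ ∃ i, τ x ∈ K i := by
        rintro ⟨i, hi⟩
        exact hx ⟨i, by rw [← hτ x]; exact hKτ i _ hi⟩
      rw [hξ_out _ hτx, hξ_out x hx, EquivSU2Aux.one_inv]
  · -- values at the fixed points
    intro i
    have hx : xs i ∈ K i := ⟨⟨0, by norm_num⟩, hcenter i⟩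
    rw [hξ_on i _ hx]
    rcases hε i with h1 | h1
    · rw [if_pos h1, h1, one_smul]
    · have hne : ¬ (ε i = 1) := by rw [h1]; norm_num
      rw [if_neg hne, h1]
      have hg0 : g i (xs i) = ⟨0, by norm_num⟩ := by
        apply (hemb i).injective
        rw [hg i _ hx, hcenter i]
      rw [hg0]
      exact EquivSU2Aux.M_zero
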